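/- Let G be a countable group, A a set, and Σ ⊆ A^G a subshift closed in the prodiscrete topology with the following uniform strong irreducibility property: there is a finite Δ ⊆ G such that for all x, y ∈ Σ and every finite E ⊆ G, there is z ∈ Σ with z = y on E and z = x outside EΔ. Let τ : Σ → Σ be the restriction of a cellular automaton whose image τ(Σ) is closed in A^G for the prodiscrete topology. If τ is post-surjective (for x ∈ Σ, y ∈ Σ asymptotic to τ(x), there exists z ∈ Σ asymptotic to x with τ(z) = y), then τ is surjective. -/
import Mathlib


open Pointwise

/-- Let `G` be a countable group, `A` a set (with the discrete topology, so that
`A^G` carries the prodiscrete topology), and `Σ ⊆ A^G` a closed subshift which is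
uniformly strongly irreducible: there is a finite `Δ ⊆ G` such that for all
`x, y ∈ Σ` and finite `E ⊆ G` there is `z ∈ Σ` with `z = y` on `E` and `z = x`
outside `EΔ`. If `τ : Σ → Σ` is the restriction of a cellular automaton whose
image `τ(Σ)` is closed in `A^G`, and `τ` is post-surjective, then `τ` is
surjective, i.e. `τ(Σ) = Σ`. -/
theorem postSurjective_implies_surjective_on_subshift
    (G A : Type*) [Group G] [Countable G] [TopologicalSpace A] [DiscreteTopology A]
    (Sig : Set (G → A))
    (hshift : ∀ (g : G), ∀ c ∈ Sig, (fun h => c (g⁻¹ * h)) ∈ Sig)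
    (hclosed : IsClosed Sig)
    (hsi : ∃ Δ : Finset G, ∀ x ∈ Sig, ∀ y ∈ Sig, ∀ E : Finset G,
      ∃ z ∈ Sig, (∀ g ∈ E, z g = y g) ∧
        ∀ g : G, g ∉ (E : Set G) * (Δ : Set G) → z g = x g)
    (M : Finset G) (μ : (M → A) → A) (τ : (G → A) → (G → A))
    (hloc : ∀ (c : G → A) (g : G), τ c g = μ fun m => c (g * (m : G)))
    (hmaps : Set.MapsTo τ Sig Sig)
    (himclosed : IsClosed (τ '' Sig))
    (hpost : ∀ x ∈ Sig, ∀ y ∈ Sig, {g | y g ≠ τ x g}.Finite →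
      ∃ z ∈ Sig, {g | z g ≠ x g}.Finite ∧ τ z = y) :
    τ '' Sig = Sig := by
  rcases Sig.eq_empty_or_nonempty with hE | ⟨x0, hx0⟩
  · simp [hE]
  apply Set.Subset.antisymm (Set.image_subset_iff.2 hmaps)
  intro y hy
  have hclos : y ∈ closure (τ '' Sig) := by
    rw [mem_closure_iff]
    intro U hU hyU
    obtain ⟨I, u, hu, hsub⟩ := isOpen_pi_iff.1 hU y hyU
    obtain ⟨Δ, hΔ⟩ := hsi
    obtain ⟨z, hz, hzy, hzx⟩ := hΔ (τ x0) (hmaps hx0) y hy I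
    have hfin : {g | z g ≠ τ x0 g}.Finite := by
      apply Set.Finite.subset (Set.Finite.mul I.finite_toSet Δ.finite_toSet)
      intro g hg
      by_contra hgn
      exact hg (hzx g hgn)
    obtain ⟨w, hw, _, hwz⟩ := hpost x0 hx0 z hz hfin
    refine ⟨z, ?_, w, hw, hwz⟩
    apply hsub
    intro i hi
    rw [hzy i hi]
    exact (hu i hi).2
  exact himclosed.closure_subset hclos
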